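/- Let f be C⁵ on a neighbourhood of x₀ and fix v ∈ E. Define the nonlinear part f_nl(a) := f(x₀ + a) − f(x₀) − f′(x₀)(a). Then the four-point stencil for the third directional derivative is fifth-order accurate: the function ε ↦ −120 • f_nl((ε/2)•v) + 48 • f_nl(ε•v) − 8 • f_nl((3ε/2)•v) − ε³ • f⁽³⁾(x₀)[v,v,v] is O(ε⁵) as ε → 0. -/

import Mathlib

open Topology Asymptotics
open Set Filter


section Helpers

variable {E F G : Type*} [NormedAddCommGroup E] [NormedSpace ℝ E]
  [NormedAddCommGroup F] [NormedSpace ℝ F]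
  [NormedAddCommGroup G] [NormedSpace ℝ G]

lemma my_fderiv_comp_const_add (f : E → F) (c x : E) :
    fderiv ℝ (fun y => f (c + y)) x = fderiv ℝ f (c + x) := by
  by_cases h : DifferentiableAt ℝ f (c + x)
  · have h1 : HasFDerivAt (fun y => f (c + y)) (fderiv ℝ f (c + x)) x := by
      have := h.hasFDerivAt.comp x ((hasFDerivAt_id x).const_add c)
      simpa [Function.comp_def] using this
    exact h1.fderiv
  · have h2 : ¬ DifferentiableAt ℝ (fun y => f (c + y)) x := by
      intro hd
      have hd' : DifferentiableAt ℝ (fun y => f (c + y)) (c + x - c) := by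
        simpa using hd
      have h3 : DifferentiableAt ℝ ((fun y => f (c + y)) ∘ fun z : E => z - c) (c + x) :=
        hd'.comp (c + x) (differentiableAt_id.sub_const c)
      have h4 : ((fun y => f (c + y)) ∘ fun z : E => z - c) = f := by
        funext z; simp [Function.comp]
      rw [h4] at h3
      exact h h3
    rw [fderiv_zero_of_not_differentiableAt h, fderiv_zero_of_not_differentiableAt h2]

lemma my_iteratedFDeriv_comp_const_add (n : ℕ) (f : E → F) (c x : E) :
    iteratedFDeriv ℝ n (fun y => f (c + y)) x = iteratedFDeriv ℝ n f (c + x) := by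
  induction n generalizing x with
  | zero => ext m; simp
  | succ n IH =>
    ext m
    rw [iteratedFDeriv_succ_apply_left, iteratedFDeriv_succ_apply_left]
    have hder : fderiv ℝ (iteratedFDeriv ℝ n fun y => f (c + y)) x
        = fderiv ℝ (iteratedFDeriv ℝ n f) (c + x) := by
      have : (iteratedFDeriv ℝ n fun y => f (c + y))
          = fun x => iteratedFDeriv ℝ n f (c + x) := by
        funext z; exact IH z
      rw [this, my_fderiv_comp_const_add (iteratedFDeriv ℝ n f) c x]
    rw [hder]

lemma my_iteratedFDeriv_comp_clm {f : E → F} {n : ℕ} (L : G →L[ℝ] E) {x : G}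
    (hf : ContDiffAt ℝ n f (L x)) :
    iteratedFDeriv ℝ n (fun y => f (L y)) x =
      (iteratedFDeriv ℝ n f (L x)).compContinuousLinearMap fun _ => L := by
  obtain ⟨u, hu, hfu⟩ : ∃ u ∈ 𝓝 (L x), ContDiffOn ℝ n f u :=
    hf.contDiffOn le_rfl (by simp)
  set s := interior u with hs
  have hso : IsOpen s := isOpen_interior
  have hxs : L x ∈ s := mem_interior_iff_mem_nhds.2 hu
  have hfs : ContDiffOn ℝ n f s := hfu.mono interior_subset
  have hpre : IsOpen (L ⁻¹' s) := hso.preimage L.continuous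
  have hxp : x ∈ L ⁻¹' s := hxs
  calc iteratedFDeriv ℝ n (fun y => f (L y)) x
      = iteratedFDerivWithin ℝ n (f ∘ L) (L ⁻¹' s) x := by
        rw [iteratedFDerivWithin_of_isOpen n hpre hxp]; rfl
    _ = (iteratedFDerivWithin ℝ n f s (L x)).compContinuousLinearMap fun _ => L :=
        L.iteratedFDerivWithin_comp_right hfs hso.uniqueDiffOn hpre.uniqueDiffOn hxs le_rfl
    _ = (iteratedFDeriv ℝ n f (L x)).compContinuousLinearMap fun _ => L := by
        rw [iteratedFDerivWithin_of_isOpen n hso hxs]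

lemma my_iteratedDeriv_add {n : ℕ} {g1 g2 : ℝ → F} {x : ℝ} (h1 : ContDiffAt ℝ n g1 x)
    (h2 : ContDiffAt ℝ n g2 x) :
    iteratedDeriv n (fun t => g1 t + g2 t) x = iteratedDeriv n g1 x + iteratedDeriv n g2 x := by
  obtain ⟨u1, hu1, hg1⟩ : ∃ u ∈ 𝓝 x, ContDiffOn ℝ n g1 u := h1.contDiffOn le_rfl (by simp)
  obtain ⟨u2, hu2, hg2⟩ : ∃ u ∈ 𝓝 x, ContDiffOn ℝ n g2 u := h2.contDiffOn le_rfl (by simp)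
  set s := interior (u1 ∩ u2) with hs
  have hso : IsOpen s := isOpen_interior
  have hxs : x ∈ s := mem_interior_iff_mem_nhds.2 (inter_mem hu1 hu2)
  have hg1s : ContDiffOn ℝ n g1 s := hg1.mono (interior_subset.trans inter_subset_left)
  have hg2s : ContDiffOn ℝ n g2 s := hg2.mono (interior_subset.trans inter_subset_right)
  simp only [iteratedDeriv_eq_iteratedFDeriv]
  rw [← iteratedFDerivWithin_of_isOpen n hso hxs, ← iteratedFDerivWithin_of_isOpen (f := g1) n hso hxs,
    ← iteratedFDerivWithin_of_isOpen (f := g2) n hso hxs,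
    iteratedFDerivWithin_add_apply' (hg1s x hxs) (hg2s x hxs) hso.uniqueDiffOn hxs]
  rfl

lemma my_iteratedDeriv_const_smul {n : ℕ} {g : ℝ → F} {x : ℝ} (c : ℝ) (h : ContDiffAt ℝ n g x) :
    iteratedDeriv n (fun t => c • g t) x = c • iteratedDeriv n g x := by
  obtain ⟨u, hu, hg⟩ : ∃ u ∈ 𝓝 x, ContDiffOn ℝ n g u := h.contDiffOn le_rfl (by simp)
  set s := interior u with hs
  have hso : IsOpen s := isOpen_interior
  have hxs : x ∈ s := mem_interior_iff_mem_nhds.2 hu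
  have hgs : ContDiffOn ℝ n g s := hg.mono interior_subset
  simp only [iteratedDeriv_eq_iteratedFDeriv]
  rw [← iteratedFDerivWithin_of_isOpen n hso hxs, ← iteratedFDerivWithin_of_isOpen (f := g) n hso hxs]
  have : iteratedFDerivWithin ℝ n (fun t => c • g t) s x
      = c • iteratedFDerivWithin ℝ n g s x :=
    iteratedFDerivWithin_const_smul_apply (hgs x hxs) hso.uniqueDiffOn hxs
  rw [this]; rfl

end Helpers

section P2

variable {F : Type*} [NormedAddCommGroup F] [NormedSpace ℝ F]

lemma my_peano (n : ℕ) : ∀ {g : ℝ → F}, ContDiffAt ℝ n g 0 →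
    (∀ k < n, iteratedDeriv k g 0 = 0) → g =O[𝓝 (0:ℝ)] fun t => t ^ n := by
  induction n with
  | zero =>
    intro g hg _
    have : g =O[𝓝 (0:ℝ)] (fun _ : ℝ => (1:ℝ)) :=
      hg.continuousAt.isBigO_one ℝ
    simpa only [pow_zero] using this
  | succ n IH =>
    intro g hg hz
    obtain ⟨u, hu, hgu⟩ : ∃ u ∈ 𝓝 (0:ℝ), ContDiffOn ℝ (n+1 : ℕ) g u :=
      hg.contDiffOn le_rfl (by simp)
    set s := interior u with hsdef
    have hso : IsOpen s := isOpen_interior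
    have h0s : (0:ℝ) ∈ s := mem_interior_iff_mem_nhds.2 hu
    have hgs : ContDiffOn ℝ (n+1 : ℕ) g s := hgu.mono interior_subset
    have hgs' : ContDiffOn ℝ ((n:WithTop ℕ∞)+1) g s := by
      exact_mod_cast hgs
    rw [contDiffOn_succ_iff_deriv_of_isOpen hso] at hgs'
    have hdiff : DifferentiableOn ℝ g s := hgs'.1
    have hderiv : ContDiffAt ℝ n (deriv g) 0 := hgs'.2.2.contDiffAt (hso.mem_nhds h0s)
    have hz' : ∀ k < n, iteratedDeriv k (deriv g) 0 = 0 := by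
      intro k hk
      have := hz (k+1) (Nat.succ_lt_succ hk)
      rwa [iteratedDeriv_succ'] at this
    have hO : deriv g =O[𝓝 (0:ℝ)] fun t => t ^ n := IH hderiv hz'
    have hg0 : g 0 = 0 := by simpa using hz 0 (Nat.succ_pos n)
    obtain ⟨C, hC⟩ := hO.isBigOWith
    rw [IsBigOWith] at hC
    have hev : ∀ᶠ t in 𝓝 (0:ℝ), ‖deriv g t‖ ≤ C * ‖t ^ n‖ ∧ t ∈ s :=
      hC.and (hso.mem_nhds h0s)
    obtain ⟨δ, hδ, hball⟩ := Metric.eventually_nhds_iff_ball.1 hev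
    set C' := max C 0 with hC'
    have hC'0 : 0 ≤ C' := le_max_right _ _
    rw [isBigO_iff]
    refine ⟨C', Metric.eventually_nhds_iff_ball.2 ⟨δ, hδ, fun t ht => ?_⟩⟩
    have htabs : |t| < δ := by simpa [Real.dist_eq] using ht
    have hmem : ∀ x : ℝ, |x| ≤ |t| → (‖deriv g x‖ ≤ C * |x| ^ n ∧ x ∈ s) := by
      intro x hx
      have : x ∈ Metric.ball (0:ℝ) δ := by
        simp only [Metric.mem_ball, Real.dist_eq, sub_zero]
        exact lt_of_le_of_lt hx htabs
      simpa [norm_pow, Real.norm_eq_abs] using hball x this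
    have hbound : ∀ x : ℝ, |x| ≤ |t| → ‖deriv g x‖ ≤ C' * |t| ^ n := by
      intro x hx
      calc ‖deriv g x‖ ≤ C * |x| ^ n := (hmem x hx).1
        _ ≤ C' * |x| ^ n := by
            apply mul_le_mul_of_nonneg_right (le_max_left _ _) (by positivity)
        _ ≤ C' * |t| ^ n := by
            apply mul_le_mul_of_nonneg_left (pow_le_pow_left₀ (abs_nonneg x) hx n) hC'0
    have hds : ∀ x : ℝ, |x| ≤ |t| → HasDerivAt g (deriv g x) x := by
      intro x hx
      exact ((hdiff x (hmem x hx).2).differentiableAt (hso.mem_nhds (hmem x hx).2)).hasDerivAt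
    have key : ‖g t‖ ≤ C' * |t| ^ n * |t| := by
      rcases le_or_gt 0 t with h0t | h0t
      · have := norm_image_sub_le_of_norm_deriv_le_segment'
          (f := g) (f' := deriv g) (a := 0) (b := t) (C := C' * |t| ^ n)
          (fun x hx => (hds x (by rw [abs_of_nonneg hx.1, abs_of_nonneg h0t]; exact hx.2)).hasDerivWithinAt)
          (fun x hx => hbound x (by rw [abs_of_nonneg hx.1, abs_of_nonneg h0t]; exact hx.2.le))
          t (right_mem_Icc.2 h0t)
        rw [hg0, sub_zero, sub_zero] at this
        calc ‖g t‖ ≤ C' * |t| ^ n * t := this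
          _ = C' * |t| ^ n * |t| := by rw [abs_of_nonneg h0t]
      · have habs : ∀ x : ℝ, x ∈ Icc t 0 → |x| ≤ |t| := by
          intro x hx
          rw [abs_of_nonpos hx.2, abs_of_nonpos h0t.le]
          exact neg_le_neg hx.1
        have := norm_image_sub_le_of_norm_deriv_le_segment'
          (f := g) (f' := deriv g) (a := t) (b := 0) (C := C' * |t| ^ n)
          (fun x hx => (hds x (habs x hx)).hasDerivWithinAt)
          (fun x hx => hbound x (habs x ⟨hx.1, hx.2.le⟩))
          0 (right_mem_Icc.2 h0t.le)
        rw [hg0, zero_sub, norm_neg, zero_sub] at this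
        calc ‖g t‖ ≤ C' * |t| ^ n * -t := this
          _ = C' * |t| ^ n * |t| := by rw [abs_of_nonpos h0t.le]
    calc ‖g t‖ ≤ C' * |t| ^ n * |t| := key
      _ = C' * ‖t ^ (n+1)‖ := by
          rw [norm_pow, Real.norm_eq_abs, pow_succ]; ring


variable {F : Type*} [NormedAddCommGroup F] [NormedSpace ℝ F]

-- monomial derivative facts
lemma my_deriv_lin (c : F) : deriv (fun t : ℝ => (24 * t) • c) = fun _ : ℝ => (24:ℝ) • c := by
  funext t
  have : HasDerivAt (fun t : ℝ => (24 * t) • c) (((24:ℝ) * 1) • c) t :=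
    ((hasDerivAt_id t).const_mul (24:ℝ)).smul_const c
  simpa using this.deriv

lemma my_deriv_cube1 (c : F) :
    deriv (fun t : ℝ => (-(t ^ 3)) • c) = fun t : ℝ => (-(3 * t ^ 2)) • c := by
  funext t
  have : HasDerivAt (fun t : ℝ => (-(t ^ 3)) • c) ((-(((3:ℕ):ℝ) * t ^ (3-1))) • c) t :=
    ((hasDerivAt_pow 3 t).neg).smul_const c
  have h2 := this.deriv
  rw [h2]
  norm_num

lemma my_deriv_cube2 (c : F) :
    deriv (fun t : ℝ => (-(3 * t ^ 2)) • c) = fun t : ℝ => (-(6 * t)) • c := by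
  funext t
  have h1 : HasDerivAt (fun t : ℝ => -(3 * t ^ 2)) (-(6 * t)) t := by
    have := ((hasDerivAt_pow 2 t).const_mul (3:ℝ)).fun_neg
    refine this.congr_deriv ?_
    norm_num; ring
  simpa using (h1.smul_const c).deriv

lemma my_deriv_cube3 (c : F) :
    deriv (fun t : ℝ => (-(6 * t)) • c) = fun _ : ℝ => ((-6:ℝ)) • c := by
  funext t
  have : HasDerivAt (fun t : ℝ => -(6 * t)) (-6) t := by
    have := ((hasDerivAt_id t).const_mul (6:ℝ)).fun_neg
    simpa using this
  simpa using (this.smul_const c).deriv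

lemma my_iteratedDeriv_zero_fun (m : ℕ) : iteratedDeriv m (fun _ : ℝ => (0:F)) 0 = 0 := by
  induction m with
  | zero => simp
  | succ m IH => rw [iteratedDeriv_succ', deriv_const']; exact IH

lemma my_iteratedDeriv_const (m : ℕ) (c : F) :
    iteratedDeriv (m + 1) (fun _ : ℝ => c) 0 = 0 := by
  rw [iteratedDeriv_succ', deriv_const']
  exact my_iteratedDeriv_zero_fun m

lemma my_lin_iter (c : F) (k : ℕ) :
    iteratedDeriv (k+1) (fun ε : ℝ => (24 * ε) • c) 0 = if k = 0 then (24:ℝ) • c else 0 := by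
  rw [iteratedDeriv_succ', my_deriv_lin]
  cases k with
  | zero => simp
  | succ m =>
    rw [if_neg (Nat.succ_ne_zero m)]
    exact my_iteratedDeriv_const m _

lemma my_cube_iter2 (c : F) (k : ℕ) :
    iteratedDeriv (k+1) (fun t : ℝ => (-(6 * t)) • c) 0 = if k = 0 then (-6:ℝ) • c else 0 := by
  rw [iteratedDeriv_succ', my_deriv_cube3]
  cases k with
  | zero => simp
  | succ m =>
    rw [if_neg (Nat.succ_ne_zero m)]
    exact my_iteratedDeriv_const m _

lemma my_cube_iter1 (c : F) (k : ℕ) :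
    iteratedDeriv (k+1) (fun t : ℝ => (-(3 * t ^ 2)) • c) 0 = if k = 1 then (-6:ℝ) • c else 0 := by
  rw [iteratedDeriv_succ', my_deriv_cube2]
  cases k with
  | zero => simp
  | succ m =>
    rw [my_cube_iter2 c m]
    simp

lemma my_cube_iter (c : F) (k : ℕ) :
    iteratedDeriv (k+1) (fun ε : ℝ => (-(ε ^ 3)) • c) 0 = if k = 2 then (-6:ℝ) • c else 0 := by
  rw [iteratedDeriv_succ', my_deriv_cube1]
  cases k with
  | zero => simp
  | succ m =>
    rw [my_cube_iter1 c m]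
    simp

end P2



/-- Fourth-order-accurate stencil for the third directional derivative:
`-120 • f_nl((ε/2)•v) + 48 • f_nl(ε•v) - 8 • f_nl((3ε/2)•v) = ε³ • f⁽³⁾(x₀)[v,v,v] + O(ε⁵)`. -/
theorem third_directional_derivative_stencil_order5
    {E F : Type*} [NormedAddCommGroup E] [NormedSpace ℝ E] [CompleteSpace E]
    [NormedAddCommGroup F] [NormedSpace ℝ F] [CompleteSpace F]
    (f : E → F) (x₀ v : E)
    (hf : ContDiffAt ℝ 5 f x₀)
    (fnl : E → F) (hfnl : ∀ a, fnl a = f (x₀ + a) - f x₀ - fderiv ℝ f x₀ a) :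
    (fun ε : ℝ =>
        -(120 : ℝ) • fnl ((ε / 2) • v) + (48 : ℝ) • fnl (ε • v)
          - (8 : ℝ) • fnl ((3 * ε / 2) • v)
          - ε ^ 3 • iteratedFDeriv ℝ 3 f x₀ ![v, v, v])
      =O[𝓝 (0 : ℝ)] fun ε => ε ^ 5 := by
  classical
  set w : F := fderiv ℝ f x₀ v with hw
  set d : ℕ → F := fun k => iteratedFDeriv ℝ k f x₀ (fun _ => v) with hd
  set h : E → F := fun y => f (x₀ + y) with hhdef
  -- h is C⁵ at 0
  have hh : ContDiffAt ℝ 5 h 0 := by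
    have ht : ContDiffAt ℝ 5 (fun y : E => x₀ + y) 0 :=
      (contDiff_const.add contDiff_id).contDiffAt
    have hf' : ContDiffAt ℝ 5 f ((fun y : E => x₀ + y) 0) := by simpa using hf
    exact hf'.comp 0 ht
  have hHk : ∀ k : ℕ, iteratedFDeriv ℝ k h 0 = iteratedFDeriv ℝ k f x₀ := by
    intro k
    have := my_iteratedFDeriv_comp_const_add k f x₀ 0
    simpa [hhdef] using this
  -- line functions
  set φ : ℝ → ℝ → F := fun c t => h (t • (c • v)) with hφdef
  have hφ : ∀ c : ℝ, ContDiffAt ℝ 5 (φ c) 0 := by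
    intro c
    have hL : ContDiff ℝ 5 fun t : ℝ => t • (c • v) := contDiff_id.smul contDiff_const
    have hh' : ContDiffAt ℝ 5 h ((0:ℝ) • (c • v)) := by simpa using hh
    have := hh'.comp (0:ℝ) hL.contDiffAt
    exact this
  have hkey : ∀ (c : ℝ) (k : ℕ), k ≤ 5 → iteratedDeriv k (φ c) 0 = c ^ k • d k := by
    intro c k hk
    set L : ℝ →L[ℝ] E := (ContinuousLinearMap.id ℝ ℝ).smulRight (c • v) with hL
    have hL0 : L 0 = 0 := by simp
    have hfd : ContDiffAt ℝ k h (L 0) := by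
      rw [hL0]
      exact hh.of_le (by exact_mod_cast hk)
    have h1 := my_iteratedFDeriv_comp_clm L hfd
    have h2 : φ c = fun y => h (L y) := by
      funext t
      simp [hφdef, hL, ContinuousLinearMap.smulRight_apply]
    rw [iteratedDeriv_eq_iteratedFDeriv, h2, h1]
    simp only [ContinuousMultilinearMap.compContinuousLinearMap_apply, hL0, hHk k]
    have hv1 : (fun _ : Fin k => L 1) = fun i : Fin k => (fun _ : Fin k => c) i • (fun _ : Fin k => v) i := by
      funext i
      simp [hL, ContinuousLinearMap.smulRight_apply]
    calc iteratedFDeriv ℝ k f x₀ (fun i => L ((fun _ : Fin k => (1:ℝ)) i))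
        = iteratedFDeriv ℝ k f x₀ (fun i : Fin k => (fun _ : Fin k => c) i • (fun _ : Fin k => v) i) := by
          rw [← hv1]
      _ = (∏ _i : Fin k, c) • iteratedFDeriv ℝ k f x₀ (fun _ => v) :=
          (iteratedFDeriv ℝ k f x₀).map_smul_univ _ _
      _ = c ^ k • d k := by
          rw [hd]
          congr 1
          simp [Finset.prod_const]
  -- the combined function
  set T : ℝ → F := fun ε => (-120:ℝ) • φ (1/2) ε + ((48:ℝ) • φ 1 ε + (-8:ℝ) • φ (3/2) ε) with hT
  set P : ℝ → F := fun ε => (80:ℝ) • d 0 + ((24 * ε) • d 1 + (-(ε^3)) • d 3) with hP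
  have hd0 : d 0 = f x₀ := by rw [hd]; exact iteratedFDeriv_zero_apply _
  have hd1 : d 1 = w := by rw [hd, hw]; exact iteratedFDeriv_one_apply _
  have hd3 : iteratedFDeriv ℝ 3 f x₀ ![v, v, v] = d 3 := by
    rw [hd]
    congr 1
    funext i
    fin_cases i <;> rfl
  have htarget : (fun ε : ℝ =>
        -(120 : ℝ) • fnl ((ε / 2) • v) + (48 : ℝ) • fnl (ε • v)
          - (8 : ℝ) • fnl ((3 * ε / 2) • v)
          - ε ^ 3 • iteratedFDeriv ℝ 3 f x₀ ![v, v, v]) = fun ε => T ε + P ε := by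
    funext ε
    have e1 : (ε / 2) • v = ε • ((1/2 : ℝ) • v) := by rw [smul_smul]; congr 1; ring
    have e2 : ε • v = ε • ((1:ℝ) • v) := by rw [one_smul]
    have e3 : (3 * ε / 2) • v = ε • ((3/2 : ℝ) • v) := by rw [smul_smul]; congr 1; ring
    rw [hfnl, hfnl, hfnl, hd3, hT, hP, e1, e2, e3]
    simp only [hφdef, hhdef, map_smul, hd0, hd1, ← hw]
    module
  rw [htarget]
  -- smoothness of the pieces
  have hTc : ContDiffAt ℝ 5 T 0 := by
    rw [hT]
    exact ((hφ (1/2)).const_smul _).add (((hφ 1).const_smul _).add ((hφ (3/2)).const_smul _))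
  have hPc : ContDiff ℝ 5 P := by
    rw [hP]
    fun_prop
  have hRc : ContDiffAt ℝ 5 (fun ε => T ε + P ε) 0 := hTc.add hPc.contDiffAt
  -- derivative values of T
  have hTval : ∀ k : ℕ, k ≤ 5 →
      iteratedDeriv k T 0 =
        ((-120:ℝ) * (1/2:ℝ)^k + (48 * (1:ℝ)^k + (-8) * (3/2:ℝ)^k)) • d k := by
    intro k hk
    have hcast : (k : WithTop ℕ∞) ≤ 5 := by exact_mod_cast hk
    have h1 := (hφ (1/2)).of_le hcast
    have h2 := (hφ 1).of_le hcast
    have h3 := (hφ (3/2)).of_le hcast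
    rw [hT, my_iteratedDeriv_add (h1.const_smul _) ((h2.const_smul _).add (h3.const_smul _)),
      my_iteratedDeriv_add (h2.const_smul _) (h3.const_smul _),
      my_iteratedDeriv_const_smul _ h1, my_iteratedDeriv_const_smul _ h2,
      my_iteratedDeriv_const_smul _ h3, hkey _ k hk, hkey _ k hk, hkey _ k hk]
    module
  -- vanishing of derivatives of the sum
  have hzero : ∀ k, k < 5 → iteratedDeriv k (fun ε => T ε + P ε) 0 = 0 := by
    intro k hk
    have hk5 : k ≤ 5 := hk.le
    have hcast : (k : WithTop ℕ∞) ≤ 5 := by exact_mod_cast hk5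
    rw [my_iteratedDeriv_add (hTc.of_le hcast) (hPc.contDiffAt.of_le hcast), hTval k hk5]
    have hsplit : ∀ m : ℕ, m ≤ 5 → iteratedDeriv m P 0 =
        iteratedDeriv m (fun _ : ℝ => (80:ℝ) • d 0) 0 +
          (iteratedDeriv m (fun ε : ℝ => (24 * ε) • d 1) 0 +
            iteratedDeriv m (fun ε : ℝ => (-(ε^3)) • d 3) 0) := by
      intro m hm
      have hmc : (m : WithTop ℕ∞) ≤ 5 := by exact_mod_cast hm
      have c1 : ContDiffAt ℝ m (fun _ : ℝ => (80:ℝ) • d 0) 0 := contDiffAt_const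
      have c2 : ContDiffAt ℝ m (fun ε : ℝ => (24 * ε) • d 1) 0 := by fun_prop
      have c3 : ContDiffAt ℝ m (fun ε : ℝ => (-(ε^3)) • d 3) 0 := by fun_prop
      rw [hP, my_iteratedDeriv_add c1 (c2.add c3), my_iteratedDeriv_add c2 c3]
    rw [hsplit k hk5]
    interval_cases k
    · simp only [iteratedDeriv_zero]
      module
    · have a1 : iteratedDeriv 1 (fun _ : ℝ => (80:ℝ) • d 0) 0 = 0 := my_iteratedDeriv_const 0 _
      have a2 : iteratedDeriv 1 (fun ε : ℝ => (24 * ε) • d 1) 0 = (24:ℝ) • d 1 := by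
        simpa using my_lin_iter (d 1) 0
      have a3 : iteratedDeriv 1 (fun ε : ℝ => (-(ε ^ 3)) • d 3) 0 = 0 := by
        simpa using my_cube_iter (d 3) 0
      rw [a1, a2, a3]
      module
    · have a1 : iteratedDeriv 2 (fun _ : ℝ => (80:ℝ) • d 0) 0 = 0 := my_iteratedDeriv_const 1 _
      have a2 : iteratedDeriv 2 (fun ε : ℝ => (24 * ε) • d 1) 0 = 0 := by
        simpa using my_lin_iter (d 1) 1
      have a3 : iteratedDeriv 2 (fun ε : ℝ => (-(ε ^ 3)) • d 3) 0 = 0 := by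
        simpa using my_cube_iter (d 3) 1
      rw [a1, a2, a3]
      module
    · have a1 : iteratedDeriv 3 (fun _ : ℝ => (80:ℝ) • d 0) 0 = 0 := my_iteratedDeriv_const 2 _
      have a2 : iteratedDeriv 3 (fun ε : ℝ => (24 * ε) • d 1) 0 = 0 := by
        simpa using my_lin_iter (d 1) 2
      have a3 : iteratedDeriv 3 (fun ε : ℝ => (-(ε ^ 3)) • d 3) 0 = (-6:ℝ) • d 3 := by
        simpa using my_cube_iter (d 3) 2
      rw [a1, a2, a3]
      module
    · have a1 : iteratedDeriv 4 (fun _ : ℝ => (80:ℝ) • d 0) 0 = 0 := my_iteratedDeriv_const 3 _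
      have a2 : iteratedDeriv 4 (fun ε : ℝ => (24 * ε) • d 1) 0 = 0 := by
        simpa using my_lin_iter (d 1) 3
      have a3 : iteratedDeriv 4 (fun ε : ℝ => (-(ε ^ 3)) • d 3) 0 = 0 := by
        simpa using my_cube_iter (d 3) 3
      rw [a1, a2, a3]
      module
  exact my_peano 5 hRc hzero
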